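/- The linear operator R on the 2×2 matrix algebra M₂(F) defined on matrix units by R(e₁₁) = e₁₂, R(e₁₂) = 0, R(e₂₁) = 0, R(e₂₂) = −e₁₂ is a Rota–Baxter operator of weight 0 on the Jordan algebra M₂(F)^(+) (with product a∘b = (ab+ba)/2), but it is not a Rota–Baxter operator of weight 0 on the associative algebra M₂(F). -/

import Mathlib

/-- The matrix unit `eᵢⱼ` in `M₂(F)`. -/
def E (F : Type*) [Field F] (i j : Fin 2) : Matrix (Fin 2) (Fin 2) F :=
  Matrix.single i j 1

theorem zhelyabin_example {F : Type*} [Field F] (h2 : (2 : F) ≠ 0)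
    (R : Matrix (Fin 2) (Fin 2) F →ₗ[F] Matrix (Fin 2) (Fin 2) F)
    (h11 : R (E F 0 0) = E F 0 1) (h12 : R (E F 0 1) = 0)
    (h21 : R (E F 1 0) = 0) (h22 : R (E F 1 1) = -E F 0 1) :
    (∀ x y : Matrix (Fin 2) (Fin 2) F,
      (2 : F)⁻¹ • (R x * R y + R y * R x) =
        R ((2 : F)⁻¹ • (R x * y + y * R x) + (2 : F)⁻¹ • (x * R y + R y * x))) ∧
    ¬ (∀ x y : Matrix (Fin 2) (Fin 2) F, R x * R y = R (R x * y + x * R y)) := by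
  have hst : ∀ (i j : Fin 2) (c : F), Matrix.single i j c = c • E F i j := by
    intro i j c
    ext a b
    simp [E, Matrix.single, Matrix.smul_apply, mul_ite, mul_one, mul_zero]
  have hR : ∀ x : Matrix (Fin 2) (Fin 2) F, R x = (x 0 0 - x 1 1) • E F 0 1 := by
    intro x
    conv_lhs => rw [Matrix.matrix_eq_sum_single x]
    simp only [map_sum, map_add, hst, map_smul, Fin.sum_univ_two, h11, h12, h21, h22]
    ext a b
    fin_cases a <;> fin_cases b <;>
      simp [E, Matrix.single, Matrix.smul_apply, Matrix.add_apply, Matrix.neg_apply] <;>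
      ring
  constructor
  · intro x y
    have hee : E F 0 1 * E F 0 1 = 0 := by
      ext i j
      simp [E, Matrix.mul_apply, Matrix.single, Fin.sum_univ_two]
    rw [hR x, hR y]
    set a := x 0 0 - x 1 1
    set b := y 0 0 - y 1 1
    have lhs0 : (2 : F)⁻¹ • (a • E F 0 1 * b • E F 0 1 + b • E F 0 1 * a • E F 0 1) = 0 := by
      simp [Matrix.smul_mul, Matrix.mul_smul, hee]
    rw [lhs0, hR]
    have : ((2 : F)⁻¹ • (a • E F 0 1 * y + y * a • E F 0 1) +
        (2 : F)⁻¹ • (x * b • E F 0 1 + b • E F 0 1 * x)) 0 0 -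
        ((2 : F)⁻¹ • (a • E F 0 1 * y + y * a • E F 0 1) +
        (2 : F)⁻¹ • (x * b • E F 0 1 + b • E F 0 1 * x)) 1 1 = 0 := by
      simp [E, Matrix.mul_apply, Matrix.single, Fin.sum_univ_two]
      ring
    rw [this, zero_smul]
  · intro h
    have := h (E F 0 0) (E F 1 0)
    rw [h11, h21] at this
    have key : E F 0 1 * E F 1 0 + E F 0 0 * 0 = E F 0 0 := by
      ext i j
      fin_cases i <;> fin_cases j <;>
        simp [E, Matrix.mul_apply, Matrix.single, Fin.sum_univ_two]
    rw [key, h11] at this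
    have h0 : (0 : Matrix (Fin 2) (Fin 2) F) = E F 0 1 := by simpa using this
    have he := congrFun (congrFun h0 0) 1
    simp [E, Matrix.single] at he
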